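/- Let q be a prime power and F_q the field with q elements. Let α ≥ 2, h ≥ 1, ℓ ≥ 1, t ≥ 1 and ε ≥ 0 be integers with h − ε ≥ 2ℓ. Let T be a finite collection of linear subspaces of F_q^{(h−ε)t} containing at least α subspaces, such that (i) every subspace in T has dimension at most ℓt, and (ii) any α distinct subspaces from T together span F_q^{(h−ε)t}. Then αℓ ≥ h − ε, and |T| ≤ (⌊(h−ε)/ℓ⌋ − 2) + (α − ⌊(h−ε)/ℓ⌋ + 1)·(q^{ℓt+1} − 1)/(q − 1). -/

import Mathlib

open Module Submodule

section Aux

variable {F M : Type*} [Field F] [AddCommGroup M] [Module F M]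

lemma aux_finrank_finset_sup_le [FiniteDimensional F M] (S : Finset (Submodule F M)) :
    finrank F ↥(S.sup id) ≤ ∑ W ∈ S, finrank F W := by
  classical
  induction S using Finset.induction_on with
  | empty => simp [finrank_bot]
  | @insert a s ha ih =>
    rw [Finset.sup_insert, Finset.sum_insert ha]
    calc finrank F ↥(id a ⊔ s.sup id)
        ≤ finrank F ↥(id a ⊔ s.sup id) + finrank F ↥(id a ⊓ s.sup id) := Nat.le_add_right _ _
      _ = finrank F ↥(id a) + finrank F ↥(s.sup id) :=
          Submodule.finrank_sup_add_finrank_inf_eq _ _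
      _ ≤ finrank F ↥a + ∑ W ∈ s, finrank F W := by
          simpa using Nat.add_le_add_left ih (finrank F ↥a)

lemma aux_exists_extension [FiniteDimensional F M] (k : ℕ) (V : Submodule F M)
    (h1 : finrank F V ≤ k) (h2 : k ≤ finrank F M) :
    ∃ V' : Submodule F M, V ≤ V' ∧ finrank F V' = k := by
  induction k with
  | zero => exact ⟨V, le_rfl, Nat.le_zero.mp h1⟩
  | succ k ih =>
    by_cases hv : finrank F V = k + 1
    · exact ⟨V, le_rfl, hv⟩
    · obtain ⟨V', hVV', hV'⟩ := ih (by omega) (by omega)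
      obtain ⟨x, hx⟩ := Submodule.exists_of_finrank_lt V' (by omega)
      have hx1 : x ∉ V' := by simpa using hx 1 one_ne_zero
      have hx0 : x ≠ 0 := fun h => hx1 (h ▸ V'.zero_mem)
      have hinf : V' ⊓ (F ∙ x) = ⊥ := by
        rw [eq_bot_iff]
        rintro y ⟨hy1, hy2⟩
        obtain ⟨c, rfl⟩ := Submodule.mem_span_singleton.mp hy2
        rcases eq_or_ne c 0 with rfl | hc
        · simp
        · exact absurd hy1 (hx c hc)
      have hrank : finrank F ↥(V' ⊔ (F ∙ x)) = k + 1 := by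
        have := Submodule.finrank_sup_add_finrank_inf_eq V' (F ∙ x)
        rw [hinf, finrank_bot, finrank_span_singleton hx0, hV'] at this
        omega
      exact ⟨V' ⊔ (F ∙ x), hVV'.trans le_sup_left, hrank⟩

lemma aux_line_eq_span {l : Submodule F M} {x : M} [FiniteDimensional F M]
    (hl : finrank F l = 1) (hx : x ∈ l) (hx0 : x ≠ 0) : l = F ∙ x := by
  refine (Submodule.eq_of_le_of_finrank_eq ((span_singleton_le_iff_mem x l).mpr hx) ?_).symm
  rw [hl, finrank_span_singleton hx0]

lemma aux_lines_count [Fintype F] {E : Type*} [AddCommGroup E] [Module F E] [Fintype E]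
    [FiniteDimensional F E] (A : Submodule F E) (L : Finset (Submodule F E))
    (hL : ∀ l ∈ L, finrank F l = 1 ∧ l ≤ A) :
    L.card * (Fintype.card F - 1) ≤ Nat.card ↥A - 1 := by
  classical
  set f : Submodule F E → Finset E := fun l => Finset.univ.filter (fun x => x ∈ l ∧ x ≠ 0)
    with hf
  have hcard : ∀ l ∈ L, (f l).card = Fintype.card F - 1 := by
    intro l hl
    have h1 : f l = (Finset.univ.filter (fun x => x ∈ l)).erase 0 := by
      ext x; simp [hf, and_comm]
    have h2 : (Finset.univ.filter (fun x => x ∈ l)).card = Fintype.card F := by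
      haveI : Fintype ↥l := Fintype.ofFinite _
      have h4 : (Finset.univ.filter (fun x => x ∈ l)).card = Fintype.card {x // x ∈ l} :=
        (Fintype.card_of_subtype (Finset.univ.filter (fun x => x ∈ l))
          (fun x => by simp)).symm
      have h3 : Fintype.card {x // x ∈ l} = Fintype.card F ^ finrank F l := card_eq_pow_finrank
      rw [h4, h3, (hL l hl).1, pow_one]
    rw [h1, Finset.card_erase_of_mem (by simp), h2]
  have hdisj : ∀ l₁ ∈ L, ∀ l₂ ∈ L, l₁ ≠ l₂ → Disjoint (f l₁) (f l₂) := by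
    intro l₁ h₁ l₂ h₂ hne
    rw [Finset.disjoint_left]
    intro x hx₁ hx₂
    simp only [hf, Finset.mem_filter] at hx₁ hx₂
    exact hne ((aux_line_eq_span (hL l₁ h₁).1 hx₁.2.1 hx₁.2.2).trans
      (aux_line_eq_span (hL l₂ h₂).1 hx₂.2.1 hx₂.2.2).symm)
  calc L.card * (Fintype.card F - 1) = ∑ l ∈ L, (f l).card := by
        rw [Finset.sum_congr rfl hcard, Finset.sum_const, smul_eq_mul]
    _ = (L.biUnion f).card := (Finset.card_biUnion hdisj).symm
    _ ≤ ((Finset.univ.filter (fun x => x ∈ A)).erase 0).card := by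
        apply Finset.card_le_card
        intro x hx
        simp only [Finset.mem_biUnion] at hx
        obtain ⟨l, hl, hxl⟩ := hx
        simp only [hf, Finset.mem_filter] at hxl
        simp only [Finset.mem_erase, Finset.mem_filter, Finset.mem_univ, true_and]
        exact ⟨hxl.2.2, (hL l hl).2 hxl.2.1⟩
    _ = Nat.card ↥A - 1 := by
        haveI : Fintype ↥A := Fintype.ofFinite _
        rw [Finset.card_erase_of_mem (by simp), Nat.card_eq_fintype_card,
          Fintype.card_of_subtype (Finset.univ.filter (fun x => x ∈ A)) (fun x => by simp)]

end Aux

set_option maxHeartbeats 1000000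
set_option synthInstance.maxHeartbeats 400000

/-- Upper bound on the size of a collection of subspaces of
`F_q^{(h-ε)t}`, each of dimension at most `ℓt`, any `α` of which span the whole space. -/
theorem stmt_1 (F : Type*) [Field F] [Fintype F]
    (α h ℓ t ε : ℕ) (hα : 2 ≤ α) (hh : 1 ≤ h) (hℓ : 1 ≤ ℓ) (ht : 1 ≤ t)
    (hhe : 2 * ℓ ≤ h - ε)
    (T : Finset (Submodule F (Fin ((h - ε) * t) → F)))
    (hTcard : α ≤ T.card)
    (hdim : ∀ W ∈ T, Module.finrank F W ≤ ℓ * t)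
    (hspan : ∀ U : Finset (Submodule F (Fin ((h - ε) * t) → F)),
      U ⊆ T → U.card = α → U.sup id = ⊤) :
    h - ε ≤ α * ℓ ∧
      T.card ≤ ((h - ε) / ℓ - 2) +
        (α - (h - ε) / ℓ + 1) *
          ((Fintype.card F ^ (ℓ * t + 1) - 1) / (Fintype.card F - 1)) := by
  classical
  set q := Fintype.card F with hq
  have hq2 : 2 ≤ q := Fintype.one_lt_card
  have hnM : finrank F (Fin ((h - ε) * t) → F) = (h - ε) * t := by simp
  -- Part 1
  have part1 : h - ε ≤ α * ℓ := by
    obtain ⟨U, hUT, hUcard⟩ := Finset.exists_subset_card_eq hTcard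
    have hsup := hspan U hUT hUcard
    have h1 : (h - ε) * t ≤ α * (ℓ * t) := by
      calc (h - ε) * t = finrank F (⊤ : Submodule F (Fin ((h - ε) * t) → F)) := by
            rw [finrank_top, hnM]
        _ = finrank F ↥(U.sup id) := by rw [hsup]
        _ ≤ ∑ W ∈ U, finrank F W := aux_finrank_finset_sup_le U
        _ ≤ ∑ _W ∈ U, ℓ * t := Finset.sum_le_sum (fun W hW => hdim W (hUT hW))
        _ = α * (ℓ * t) := by rw [Finset.sum_const, hUcard, smul_eq_mul]
    have h2 : (h - ε) * t ≤ (α * ℓ) * t := by rw [mul_assoc]; exact h1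
    exact Nat.le_of_mul_le_mul_right h2 ht
  refine ⟨part1, ?_⟩
  -- Part 2
  set m := (h - ε) / ℓ with hm
  have hℓpos : 0 < ℓ := hℓ
  have hm2 : 2 ≤ m := (Nat.le_div_iff_mul_le hℓpos).mpr hhe
  have hmℓ : m * ℓ ≤ h - ε := Nat.div_mul_le_self _ _
  have hmα : m ≤ α := by
    have h1 := Nat.div_le_div_right (c := ℓ) part1
    rwa [Nat.mul_div_cancel α hℓpos] at h1
  obtain ⟨S, hST, hScard⟩ := Finset.exists_subset_card_eq (show m - 2 ≤ T.card by omega)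
  set V := S.sup id with hV
  have hVrank : finrank F ↥V ≤ (m - 2) * (ℓ * t) := by
    calc finrank F ↥V ≤ ∑ W ∈ S, finrank F ↥W := aux_finrank_finset_sup_le S
      _ ≤ ∑ _W ∈ S, ℓ * t := Finset.sum_le_sum fun W hW => hdim W (hST hW)
      _ = (m - 2) * (ℓ * t) := by rw [Finset.sum_const, hScard, smul_eq_mul]
  have hℓt1 : 1 ≤ ℓ * t := Nat.one_le_iff_ne_zero.mpr (by positivity)
  have hkey : (m - 2) * (ℓ * t) + (ℓ * t + 1) ≤ (h - ε) * t := by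
    have e1 : (m - 2) * (ℓ * t) + (ℓ * t + 1) = (m - 1) * (ℓ * t) + 1 := by
      have e : m - 1 = (m - 2) + 1 := by omega
      rw [e, add_mul, one_mul]; omega
    have e2 : (m - 1) * ℓ + 1 ≤ h - ε := by
      have e : (m - 1) * ℓ + ℓ = m * ℓ := by
        have e' : m - 1 + 1 = m := by omega
        calc (m - 1) * ℓ + ℓ = (m - 1 + 1) * ℓ := by ring
          _ = m * ℓ := by rw [e']
      omega
    calc (m - 2) * (ℓ * t) + (ℓ * t + 1) = (m - 1) * (ℓ * t) + 1 := e1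
      _ = ((m - 1) * ℓ) * t + 1 := by rw [mul_assoc]
      _ ≤ ((m - 1) * ℓ) * t + t := by omega
      _ = ((m - 1) * ℓ + 1) * t := by ring
      _ ≤ (h - ε) * t := Nat.mul_le_mul_right t e2
  obtain ⟨V', hVV', hV'rank⟩ := aux_exists_extension ((h - ε) * t - (ℓ * t + 1)) V
    (by omega) (by rw [hnM]; omega)
  set A := V'.dualAnnihilator with hA
  have hArank : finrank F ↥A = ℓ * t + 1 := by
    have h1 := Submodule.finrank_quotient_add_finrank V'
    have h2 : finrank F ((Fin ((h - ε) * t) → F) ⧸ V') = finrank F ↥A :=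
      LinearEquiv.finrank_eq (Subspace.quotEquivAnnihilator V')
    rw [hnM] at h1
    omega
  haveI : Finite (Module.Dual F (Fin ((h - ε) * t) → F)) :=
    Finite.of_injective (fun f => (f : (Fin ((h - ε) * t) → F) → F)) DFunLike.coe_injective
  haveI : Fintype (Module.Dual F (Fin ((h - ε) * t) → F)) := Fintype.ofFinite _
  have hchoice : ∀ W : Submodule F (Fin ((h - ε) * t) → F),
      ∃ f : Module.Dual F (Fin ((h - ε) * t) → F),
      W ∈ T \ S → (f ≠ 0 ∧ f ∈ A ∧ ∀ x ∈ W, f x = 0) := by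
    intro W
    by_cases hW : W ∈ T \ S
    · have hWT : W ∈ T := (Finset.mem_sdiff.mp hW).1
      have hproper : V' ⊔ W < ⊤ := by
        have h1 := Submodule.finrank_sup_add_finrank_inf_eq V' W
        have h2 := hdim W hWT
        have hr : finrank F ↥(V' ⊔ W) < finrank F (Fin ((h - ε) * t) → F) := by
          rw [hnM]; omega
        refine lt_top_iff_ne_top.mpr (fun hcontra => ?_)
        rw [hcontra, finrank_top] at hr
        omega
      obtain ⟨f, hf0, hfker⟩ :=
        Submodule.exists_dual_map_eq_bot_of_lt_top hproper inferInstance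
      have hker : ∀ x ∈ V' ⊔ W, f x = 0 := by
        intro x hx
        have hmem : f x ∈ Submodule.map f (V' ⊔ W) := Submodule.mem_map_of_mem hx
        rw [hfker] at hmem
        exact (Submodule.mem_bot F).mp hmem
      refine ⟨f, fun _ => ⟨hf0, ?_, fun x hx => hker x (le_sup_right (a := V') hx)⟩⟩
      rw [hA, Submodule.mem_dualAnnihilator]
      exact fun x hx => hker x (le_sup_left (b := W) hx)
    · exact ⟨0, fun hc => absurd hc hW⟩
  choose f hf using hchoice
  set g : Submodule F (Fin ((h - ε) * t) → F) →
      Submodule F (Module.Dual F (Fin ((h - ε) * t) → F)) := fun W => F ∙ f W with hg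
  have hfiber : ∀ l ∈ (T \ S).image g,
      ((T \ S).filter (fun W => g W = l)).card ≤ α - m + 1 := by
    intro l hl
    by_contra hcon
    push_neg at hcon
    obtain ⟨U', hU'sub, hU'card⟩ := Finset.exists_subset_card_eq
      (show α - m + 2 ≤ ((T \ S).filter (fun W => g W = l)).card by omega)
    obtain ⟨W₀, hW₀⟩ : U'.Nonempty := Finset.card_pos.mp (by omega)
    have hW₀mem := hU'sub hW₀
    have hW₀TS : W₀ ∈ T \ S := (Finset.mem_filter.mp hW₀mem).1
    have hf₀ := hf W₀ hW₀TS
    have hU'ker : ∀ W ∈ U', ∀ x ∈ W, f W₀ x = 0 := by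
      intro W hW x hx
      have hWmem := hU'sub hW
      have hWTS : W ∈ T \ S := (Finset.mem_filter.mp hWmem).1
      have hfW := hf W hWTS
      have hgW : g W = g W₀ := by
        rw [(Finset.mem_filter.mp hWmem).2, (Finset.mem_filter.mp hW₀mem).2]
      have hmem : f W ∈ (F ∙ f W₀ : Submodule F (Module.Dual F (Fin ((h - ε) * t) → F))) := by
        have h1 : f W ∈ g W := Submodule.mem_span_singleton_self _
        rwa [hgW] at h1
      obtain ⟨c, hc⟩ := Submodule.mem_span_singleton.mp hmem
      have hc0 : c ≠ 0 := by
        rintro rfl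
        apply hfW.1
        rw [← hc, zero_smul]
      have hzero := hfW.2.2 x hx
      rw [← hc] at hzero
      have h2 : c * f W₀ x = 0 := by simpa using hzero
      rcases mul_eq_zero.mp h2 with h' | h'
      · exact absurd h' hc0
      · exact h'
    have hdisj : Disjoint S U' := by
      rw [Finset.disjoint_left]
      intro a haS haU'
      exact (Finset.mem_sdiff.mp (Finset.mem_filter.mp (hU'sub haU')).1).2 haS
    have hUT : S ∪ U' ⊆ T := Finset.union_subset hST
      (fun W hW => (Finset.mem_sdiff.mp (Finset.mem_filter.mp (hU'sub hW)).1).1)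
    have hUcard : (S ∪ U').card = α := by
      rw [Finset.card_union_of_disjoint hdisj, hScard, hU'card]; omega
    have hsup := hspan (S ∪ U') hUT hUcard
    have hle : (S ∪ U').sup id ≤ LinearMap.ker (f W₀) := by
      apply Finset.sup_le
      intro W hW
      rcases Finset.mem_union.mp hW with hWS | hWU'
      · intro x hx
        have hxV : x ∈ V := (Finset.le_sup (f := id) hWS) hx
        have hxV' : x ∈ V' := hVV' hxV
        have hann : ∀ y ∈ V', f W₀ y = 0 := by
          have := hf₀.2.1
          rw [hA, Submodule.mem_dualAnnihilator] at this
          exact this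
        exact LinearMap.mem_ker.mpr (hann x hxV')
      · exact fun x hx => LinearMap.mem_ker.mpr (hU'ker W hWU' x hx)
    rw [hsup, top_le_iff, LinearMap.ker_eq_top] at hle
    exact hf₀.1 hle
  have hlines : ∀ l ∈ (T \ S).image g, finrank F ↥l = 1 ∧ l ≤ A := by
    intro l hl
    obtain ⟨W, hW, rfl⟩ := Finset.mem_image.mp hl
    have hfW := hf W hW
    constructor
    · exact finrank_span_singleton hfW.1
    · show (F ∙ f W) ≤ A
      rw [Submodule.span_singleton_le_iff_mem]
      exact hfW.2.1
  have hcardA : Nat.card ↥A = q ^ (ℓ * t + 1) := by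
    haveI : Fintype ↥A := Fintype.ofFinite _
    rw [Nat.card_eq_fintype_card, card_eq_pow_finrank (K := F) (V := ↥A), hArank]
  have himg : ((T \ S).image g).card * (q - 1) ≤ q ^ (ℓ * t + 1) - 1 := by
    have h1 := aux_lines_count A ((T \ S).image g) hlines
    rwa [hcardA] at h1
  have himg2 : ((T \ S).image g).card ≤ (q ^ (ℓ * t + 1) - 1) / (q - 1) :=
    (Nat.le_div_iff_mul_le (by omega)).mpr himg
  have hsum : (T \ S).card ≤ ((T \ S).image g).card * (α - m + 1) := by
    rw [Finset.card_eq_sum_card_image g (T \ S)]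
    calc ∑ l ∈ (T \ S).image g, ((T \ S).filter (fun W => g W = l)).card
        ≤ ∑ _l ∈ (T \ S).image g, (α - m + 1) := Finset.sum_le_sum hfiber
      _ = ((T \ S).image g).card * (α - m + 1) := by rw [Finset.sum_const, smul_eq_mul]
  have hfinal : (T \ S).card ≤ (α - m + 1) * ((q ^ (ℓ * t + 1) - 1) / (q - 1)) := by
    calc (T \ S).card ≤ ((T \ S).image g).card * (α - m + 1) := hsum
      _ ≤ ((q ^ (ℓ * t + 1) - 1) / (q - 1)) * (α - m + 1) := Nat.mul_le_mul_right _ himg2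
      _ = (α - m + 1) * ((q ^ (ℓ * t + 1) - 1) / (q - 1)) := mul_comm _ _
  have hsplit := Finset.card_sdiff_add_card_eq_card hST
  omega
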